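/- Let 0 < a < b with ab = rs and let u : ℝ² → ℝ be differentiable at every point of the annulus A_p(a,b). Then the Dirichlet energy is invariant under composition with the Kelvin transform: ∫_{A_p(a,b)} ‖D(u∘K)(x)‖² dx = ∫_{A_p(a,b)} ‖Du(x)‖² dx, where ‖·‖ is the operator norm of the Fréchet derivative and both integrals are taken in [0, ∞]. -/

import Mathlib

open MeasureTheory
open scoped ENNReal NNReal

/-- The Kelvin transform centered at `p` with parameter `r * s`. -/
noncomputable def kelvin (p : EuclideanSpace ℝ (Fin 2)) (r s : ℝ)
    (x : EuclideanSpace ℝ (Fin 2)) : EuclideanSpace ℝ (Fin 2) :=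
  p + (r * s / ‖x - p‖ ^ 2) • (x - p)

/-- The open annulus of radii `a < b` centered at `p`. -/
def annulus (p : EuclideanSpace ℝ (Fin 2)) (a b : ℝ) :
    Set (EuclideanSpace ℝ (Fin 2)) :=
  {x | a < ‖x - p‖ ∧ ‖x - p‖ < b}

open EuclideanGeometry

lemma kelvin_eq_inversion (p : EuclideanSpace ℝ (Fin 2)) (r s : ℝ) (hrs : 0 ≤ r * s) :
    kelvin p r s = inversion p (Real.sqrt (r * s)) := by
  funext x
  simp only [kelvin, inversion_def, vsub_eq_sub, vadd_eq_add, div_pow, Real.sq_sqrt hrs,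
    dist_eq_norm, add_comm]

lemma opNorm_comp_reflectionCLM (B : EuclideanSpace ℝ (Fin 2) →L[ℝ] ℝ)
    (K : Submodule ℝ (EuclideanSpace ℝ (Fin 2))) [K.HasOrthogonalProjection] :
    ‖B.comp (Submodule.reflection K :
      EuclideanSpace ℝ (Fin 2) →L[ℝ] EuclideanSpace ℝ (Fin 2))‖ = ‖B‖ :=
  B.opNorm_comp_linearIsometryEquiv (Submodule.reflection K)

lemma abs_det_reflectionCLM (K : Submodule ℝ (EuclideanSpace ℝ (Fin 2)))
    [K.HasOrthogonalProjection] :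
    |((Submodule.reflection K : EuclideanSpace ℝ (Fin 2) →L[ℝ] EuclideanSpace ℝ (Fin 2))).det| = 1 := by
  set T : EuclideanSpace ℝ (Fin 2) →L[ℝ] EuclideanSpace ℝ (Fin 2) :=
    (Submodule.reflection K : EuclideanSpace ℝ (Fin 2) →L[ℝ] EuclideanSpace ℝ (Fin 2)) with hT
  have h : (T : EuclideanSpace ℝ (Fin 2) →ₗ[ℝ] EuclideanSpace ℝ (Fin 2)) ∘ₗ
      (T : EuclideanSpace ℝ (Fin 2) →ₗ[ℝ] EuclideanSpace ℝ (Fin 2)) = LinearMap.id := by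
    ext x
    simp [hT, Submodule.reflection_reflection]
  have h2 : T.det * T.det = 1 := by
    rw [ContinuousLinearMap.det, ← LinearMap.det_comp, h, LinearMap.det_id]
  rcases mul_self_eq_one_iff.1 h2 with h3 | h3 <;> rw [ContinuousLinearMap.det] at h3 <;>
    rw [ContinuousLinearMap.det, h3] <;> norm_num

theorem kelvin_dirichlet_invariance (p : EuclideanSpace ℝ (Fin 2)) (r s a b : ℝ)
    (hr : 0 < r) (hs : 0 < s) (ha : 0 < a) (hab : a < b) (habrs : a * b = r * s)
    (u : EuclideanSpace ℝ (Fin 2) → ℝ)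
    (hu : ∀ x ∈ annulus p a b, DifferentiableAt ℝ u x) :
    ∫⁻ x in annulus p a b, (‖fderiv ℝ (u ∘ kelvin p r s) x‖₊ : ℝ≥0∞) ^ 2 =
      ∫⁻ x in annulus p a b, (‖fderiv ℝ u x‖₊ : ℝ≥0∞) ^ 2 := by
  have hrs : (0:ℝ) < r * s := mul_pos hr hs
  set R := Real.sqrt (r * s) with hRdef
  have hR2 : R ^ 2 = r * s := Real.sq_sqrt hrs.le
  have hR0 : R ≠ 0 := (Real.sqrt_pos.2 hrs).ne'
  set K := inversion p R with hKdef
  have hkel : kelvin p r s = K := kelvin_eq_inversion p r s hrs.le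
  set A := annulus p a b with hAdef
  have hAopen : IsOpen A := by
    have : A = {x | a < ‖x - p‖} ∩ {x | ‖x - p‖ < b} := rfl
    rw [this]
    exact (isOpen_lt continuous_const ((continuous_id.sub continuous_const).norm)).inter
      (isOpen_lt ((continuous_id.sub continuous_const).norm) continuous_const)
  have hAm : MeasurableSet A := hAopen.measurableSet
  have hne : ∀ x ∈ A, x ≠ p := by
    intro x hx h
    rw [hAdef] at hx
    simp only [annulus, Set.mem_setOf_eq, h, sub_self, norm_zero] at hx
    exact absurd hx.1 ha.not_gt
  have hmaps : ∀ x ∈ A, K x ∈ A := by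
    rintro x ⟨h1, h2⟩
    have hd : 0 < ‖x - p‖ := ha.trans h1
    have hdist : ‖K x - p‖ = r * s / ‖x - p‖ := by
      rw [← dist_eq_norm, hKdef, dist_inversion_center, hR2, dist_eq_norm]
    constructor
    · rw [hdist, lt_div_iff₀ hd]; nlinarith
    · rw [hdist, div_lt_iff₀ hd]; nlinarith
  have hKK : ∀ x, K (K x) = x := inversion_inversion p hR0
  have hinj : Set.InjOn K A := fun x _ y _ hxy => by
    rw [← hKK x, ← hKK y, hxy]
  have himg : K '' A = A := by
    apply Set.Subset.antisymm
    · rintro _ ⟨x, hx, rfl⟩; exact hmaps x hx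
    · intro x hx
      exact ⟨K x, hmaps x hx, hKK x⟩
  set f' : EuclideanSpace ℝ (Fin 2) →
      (EuclideanSpace ℝ (Fin 2) →L[ℝ] EuclideanSpace ℝ (Fin 2)) :=
    fun x => (R / dist x p) ^ 2 •
      (Submodule.reflection (ℝ ∙ (x - p))ᗮ :
        EuclideanSpace ℝ (Fin 2) →L[ℝ] EuclideanSpace ℝ (Fin 2)) with hf'def
  have hf' : ∀ x ∈ A, HasFDerivAt K (f' x) x := fun x hx =>
    hasFDerivAt_inversion (hne x hx)
  have hcval : ∀ x : EuclideanSpace ℝ (Fin 2), (R / dist x p) ^ 2 = r * s / ‖x - p‖ ^ 2 := by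
    intro x; rw [div_pow, hR2, dist_eq_norm]
  have hcpos : ∀ x ∈ A, 0 < r * s / ‖x - p‖ ^ 2 := by
    intro x hx
    have hd : 0 < ‖x - p‖ := ha.trans hx.1
    positivity
  have hdet : ∀ x ∈ A, |(f' x).det| = (r * s / ‖x - p‖ ^ 2) ^ 2 := by
    intro x hx
    have : (f' x).det = ((R / dist x p) ^ 2) ^ 2 *
        ((Submodule.reflection (ℝ ∙ (x - p))ᗮ :
          EuclideanSpace ℝ (Fin 2) →L[ℝ] EuclideanSpace ℝ (Fin 2))).det := by
      rw [hf'def]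
      simp only [ContinuousLinearMap.det, ContinuousLinearMap.coe_smul, LinearMap.det_smul,
        finrank_euclideanSpace_fin]
    rw [this, abs_mul, abs_det_reflectionCLM, mul_one, abs_pow, hcval,
      abs_of_nonneg (hcpos x hx).le]
  have hnorm : ∀ x ∈ A, ‖fderiv ℝ (u ∘ K) x‖ =
      (r * s / ‖x - p‖ ^ 2) * ‖fderiv ℝ u (K x)‖ := by
    intro x hx
    have hcomp : HasFDerivAt (u ∘ K) ((fderiv ℝ u (K x)).comp (f' x)) x :=
      ((hu (K x) (hmaps x hx)).hasFDerivAt).comp x (hf' x hx)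
    rw [hcomp.fderiv, hf'def]
    rw [ContinuousLinearMap.comp_smul, norm_smul, Real.norm_eq_abs, abs_pow, sq_abs,
      hcval, opNorm_comp_reflectionCLM]
  rw [hkel]
  calc ∫⁻ x in A, (‖fderiv ℝ (u ∘ K) x‖₊ : ℝ≥0∞) ^ 2
      = ∫⁻ x in A, ENNReal.ofReal |(f' x).det| * ((‖fderiv ℝ u (K x)‖₊ : ℝ≥0∞) ^ 2) := by
        refine setLIntegral_congr_fun hAm (fun x hx => ?_)
        have hon : ∀ y : EuclideanSpace ℝ (Fin 2) →L[ℝ] ℝ,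
            ENNReal.ofReal ‖y‖ = (‖y‖₊ : ℝ≥0∞) := fun y => ofReal_norm y
        rw [← hon, hnorm x hx, hdet x hx,
          ENNReal.ofReal_mul (hcpos x hx).le, mul_pow, ← ENNReal.ofReal_pow (hcpos x hx).le,
          hon]
    _ = ∫⁻ x in K '' A, (‖fderiv ℝ u x‖₊ : ℝ≥0∞) ^ 2 :=
        (lintegral_image_eq_lintegral_abs_det_fderiv_mul volume hAm
          (fun x hx => (hf' x hx).hasFDerivWithinAt) hinj
          (fun y => (‖fderiv ℝ u y‖₊ : ℝ≥0∞) ^ 2)).symm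
    _ = ∫⁻ x in A, (‖fderiv ℝ u x‖₊ : ℝ≥0∞) ^ 2 := by rw [himg]
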